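/- Let n ≥ 2 and let G = G_1 × ⋯ × G_n be a direct product of finite groups such that every maximal subgroup M of G splits as a direct product M = M_1 × ⋯ × M_n with M_i ≤ G_i for every i. Then for every subgroup H = H_1 × ⋯ × H_n of G with H_i ≤ G_i for all i, one has λ_G(H) = ∏_{i=1}^n λ_{G_i}(H_i). -/

import Mathlib

open Classical in
/-- The Möbius function of a finite partial order with a top element:
`mob ⊤ = 1` and `mob x = -∑_{x < y ≤ ⊤} mob y` for `x ≠ ⊤`. -/
noncomputable def mob {α : Type*} [PartialOrder α] [OrderTop α] [Finite α] (x : α) : ℤ :=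
  if x = ⊤ then 1
  else - ∑ y ∈ (Set.toFinite {y : α | x < y}).toFinset.attach, mob y.1
termination_by (Set.toFinite {y : α | x < y}).toFinset.card
decreasing_by
  have hy : x < y.1 := by
    have h2 := y.2
    rwa [Set.Finite.mem_toFinset] at h2
  refine Finset.card_lt_card ?_
  rw [Finset.ssubset_iff_of_subset]
  · exact ⟨y.1, by rwa [Set.Finite.mem_toFinset], by simp [Set.Finite.mem_toFinset]⟩
  · intro z hz
    rw [Set.Finite.mem_toFinset] at hz ⊢
    exact hy.trans hz

section C

variable (G : Type*) [Group G]

instance subgroupFinite [Finite G] : Finite (Subgroup G) :=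
  Finite.of_injective (fun H => (H : Set G)) SetLike.coe_injective

/-- Type synonym for `Subgroup G`, endowed with the preorder `H ≼ K` iff
`H ≤ gKg⁻¹` for some `g : G`. -/
def CSub := Subgroup G

variable {G}

/-- Conversion from `Subgroup G` to the type synonym `CSub G`. -/
def CSub.mk (H : Subgroup G) : CSub G := H

/-- Conversion from the type synonym `CSub G` to `Subgroup G`. -/
def CSub.toSubgroup (H : CSub G) : Subgroup G := H

variable (G)

instance : Preorder (CSub G) where
  le H K := ∃ g : G, H.toSubgroup ≤ K.toSubgroup.map (MulAut.conj g).toMonoidHom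
  le_refl H := ⟨1, by
    simp only [map_one]
    rw [show MulEquiv.toMonoidHom (1 : MulAut G) = MonoidHom.id G from rfl, Subgroup.map_id]⟩
  le_trans H K L := by
    rintro ⟨g, hg⟩ ⟨h, hh⟩
    refine ⟨g * h, hg.trans ?_⟩
    have hm := Subgroup.map_mono (f := (MulAut.conj g).toMonoidHom) hh
    rw [Subgroup.map_map] at hm
    refine hm.trans (le_of_eq ?_)
    congr 1
    ext x
    simp [mul_assoc]

instance [Finite G] : Finite (CSub G) := subgroupFinite G

/-- The poset of conjugacy classes of subgroups of `G`: for a finite group this is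
the quotient of subgroups by conjugacy, with `[H] ≤ [K]` iff `H ≤ gKg⁻¹` for some `g ∈ G`. -/
abbrev ConjClassSub := Antisymmetrization (CSub G) (· ≤ ·)

/-- The conjugacy class of a subgroup, as an element of `ConjClassSub G`. -/
def conjClassOf (H : Subgroup G) : ConjClassSub G :=
  toAntisymmetrization (α := CSub G) (· ≤ ·) (CSub.mk H)

instance : OrderTop (ConjClassSub G) where
  top := conjClassOf G ⊤
  le_top c := by
    induction c using Quotient.ind with
    | _ H =>
      show toAntisymmetrization (α := CSub G) (· ≤ ·) H ≤
        toAntisymmetrization (α := CSub G) (· ≤ ·) (CSub.mk ⊤)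
      rw [toAntisymmetrization_le_toAntisymmetrization_iff]
      refine ⟨1, ?_⟩
      show H.toSubgroup ≤ Subgroup.map (MulAut.conj (1:G)).toMonoidHom (⊤ : Subgroup G)
      rw [Subgroup.map_top_of_surjective _ (MulAut.conj (1:G)).surjective]
      exact le_top

instance [Finite G] : Finite (ConjClassSub G) := Quotient.finite _

variable {G}

/-- The Möbius function `μ_G` on the subgroup lattice of the finite group `G`. -/
noncomputable def muSub [Finite G] (H : Subgroup G) : ℤ := mob H

/-- The Möbius function `λ_G` on the poset of conjugacy classes of subgroups of the
finite group `G`, evaluated at the class of `H`. -/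
noncomputable def lamSub [Finite G] (H : Subgroup G) : ℤ :=
  mob (conjClassOf G H)

/-- `G` satisfies the (μ,λ)-property if `μ_G(H) = [N_{G'}(H) : G' ∩ H] · λ_G(H)`
for every subgroup `H ≤ G`, where `G' = [G,G]` and `N_{G'}(H) = N_G(H) ∩ G'`. -/
def MuLambdaProperty (G : Type*) [Group G] [Finite G] : Prop :=
  ∀ H : Subgroup G,
    muSub H =
      ((commutator G ⊓ H).relIndex (Subgroup.normalizer (H : Set G) ⊓ commutator G) : ℤ) * lamSub H

/-- `MaxInt G` consists of `G` itself (the subgroup `⊤`) together with all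
intersections of nonempty families of maximal subgroups of `G`. -/
def MaxInt (G : Type*) [Group G] : Set (Subgroup G) :=
  {H | H = ⊤ ∨ ∃ S : Set (Subgroup G), S.Nonempty ∧ (∀ M ∈ S, IsCoatom M) ∧ H = sInf S}

end C

instance {n R : Type*} [DecidableEq n] [Fintype n] [CommRing R] [Finite R] :
    Finite (Matrix.SpecialLinearGroup n R) :=
  Finite.of_injective (fun A => (A : Matrix n n R)) Subtype.coe_injective

open scoped MatrixGroups

section MobLemmas

open Finset Classical

variable {α : Type*} [PartialOrder α] [OrderTop α] [Fintype α]

open Classical in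
lemma mob_sum (x : α) :
    ∑ y ∈ univ.filter (fun y => x ≤ y), mob y = if x = ⊤ then 1 else 0 := by
  by_cases hx : x = ⊤
  · subst hx
    rw [if_pos rfl]
    have : univ.filter (fun y : α => ⊤ ≤ y) = {⊤} := by
      ext y; simp [top_le_iff, eq_comm]
    rw [this, Finset.sum_singleton, mob, if_pos rfl]
  · rw [if_neg hx]
    have hsplit : univ.filter (fun y : α => x ≤ y)
        = insert x (univ.filter (fun y : α => x < y)) := by
      ext y
      simp only [mem_filter, mem_univ, true_and, mem_insert]
      constructor
      · intro h
        rcases eq_or_lt_of_le h with h' | h'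
        · exact Or.inl h'.symm
        · exact Or.inr h'
      · rintro (rfl | h)
        · exact le_refl _
        · exact le_of_lt h
    rw [hsplit, Finset.sum_insert (by simp)]
    have hconv : ∑ y ∈ univ.filter (fun y : α => x < y), mob y
        = ∑ y ∈ (Set.toFinite {y : α | x < y}).toFinset.attach, mob y.1 := by
      rw [Finset.sum_attach]
      apply Finset.sum_congr
      · ext y; simp [Set.Finite.mem_toFinset]
      · intros; rfl
    rw [hconv, mob, if_neg hx]
    ring

open Classical in
lemma mob_unique (f : α → ℤ)
    (hf : ∀ x : α, ∑ y ∈ univ.filter (fun y => x ≤ y), f y = if x = ⊤ then 1 else 0)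
    (x : α) : f x = mob x := by
  have key : ∀ (N : ℕ) (x : α), (univ.filter (fun y => x < y)).card = N → f x = mob x := by
    intro N
    induction N using Nat.strong_induction_on with
    | _ N ih =>
      intro x hx
      have hsplit : univ.filter (fun y : α => x ≤ y)
          = insert x (univ.filter (fun y : α => x < y)) := by
        ext y
        simp only [mem_filter, mem_univ, true_and, mem_insert]
        constructor
        · intro h
          rcases eq_or_lt_of_le h with h' | h'
          · exact Or.inl h'.symm
          · exact Or.inr h'
        · rintro (rfl | h)
          · exact le_refl _
          · exact le_of_lt h
      have h1 := hf x
      have h2 := mob_sum x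
      rw [hsplit, Finset.sum_insert (by simp)] at h1 h2
      have heq : ∑ y ∈ univ.filter (fun y : α => x < y), f y
          = ∑ y ∈ univ.filter (fun y : α => x < y), mob y := by
        apply Finset.sum_congr rfl
        intro y hy
        simp only [mem_filter, mem_univ, true_and] at hy
        refine ih _ ?_ y rfl
        rw [← hx]
        apply Finset.card_lt_card
        rw [Finset.ssubset_iff_of_subset]
        · exact ⟨y, by simp [hy], by simp⟩
        · intro z hz
          simp only [mem_filter, mem_univ, true_and] at hz ⊢
          exact hy.trans hz
      omega
  exact key _ x rfl

open Classical in
lemma mob_orderIso {β : Type*} [PartialOrder β] [OrderTop β] [Fintype β]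
    (e : α ≃o β) (x : α) : mob (e x) = mob x := by
  refine mob_unique (fun z : α => mob (e z)) ?_ x
  intro x
  have himg : (univ.filter (fun y : α => x ≤ y)).image e
      = univ.filter (fun z : β => e x ≤ z) := by
    ext z
    simp only [mem_image, mem_filter, mem_univ, true_and]
    constructor
    · rintro ⟨y, hy, rfl⟩
      exact e.le_iff_le.2 hy
    · intro hz
      refine ⟨e.symm z, ?_, by simp⟩
      have h2 : e.symm (e x) ≤ e.symm z := e.symm.le_iff_le.2 hz
      simpa using h2
  have : ∑ y ∈ univ.filter (fun y : α => x ≤ y), mob (e y)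
      = ∑ z ∈ univ.filter (fun z : β => e x ≤ z), mob z := by
    rw [← himg, Finset.sum_image (fun a _ b _ h => e.injective h)]
  rw [this, mob_sum]
  congr 1
  simp only [eq_iff_iff]
  constructor
  · intro h
    apply e.injective
    rw [h, e.map_top]
  · rintro rfl
    exact e.map_top

open Classical in
lemma mob_pi {ι : Type*} [Fintype ι] {P : ι → Type*} [∀ i, PartialOrder (P i)]
    [∀ i, OrderTop (P i)] [∀ i, Fintype (P i)] (x : ∀ i, P i) :
    mob x = ∏ i, mob (x i) := by
  refine (mob_unique (fun z : ∀ i, P i => ∏ i, mob (z i)) ?_ x).symm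
  intro x
  have hfilter : univ.filter (fun y : ∀ i, P i => x ≤ y)
      = Fintype.piFinset (fun i => univ.filter (fun z : P i => x i ≤ z)) := by
    ext y
    simp [Fintype.mem_piFinset, Pi.le_def]
  rw [hfilter, ← Finset.prod_univ_sum]
  have : ∀ i, ∑ z ∈ univ.filter (fun z : P i => x i ≤ z), mob z
      = if x i = ⊤ then 1 else 0 := fun i => mob_sum (x i)
  rw [Finset.prod_congr rfl (fun i _ => this i)]
  by_cases hx : x = ⊤
  · subst hx
    simp [Pi.top_apply]
  · rw [if_neg hx]
    have : ∃ i, x i ≠ ⊤ := by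
      by_contra h
      push_neg at h
      exact hx (funext fun i => h i)
    obtain ⟨i, hi⟩ := this
    exact Finset.prod_eq_zero (mem_univ i) (by rw [if_neg hi])

end MobLemmas

open Classical in
noncomputable def mu2 {α : Type*} [PartialOrder α] [Finite α] (a b : α) : ℤ :=
  if a = b then 1
  else - ∑ y ∈ (Set.toFinite {y : α | a ≤ y ∧ y < b}).toFinset.attach, mu2 a y.1
termination_by (Set.toFinite {y : α | a ≤ y ∧ y < b}).toFinset.card
decreasing_by
  have hy : a ≤ y.1 ∧ y.1 < b := by
    have h2 := y.2
    rwa [Set.Finite.mem_toFinset] at h2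
  refine Finset.card_lt_card ?_
  rw [Finset.ssubset_iff_of_subset]
  · refine ⟨y.1, ?_, by simp [Set.Finite.mem_toFinset]⟩
    rw [Set.Finite.mem_toFinset]
    exact hy
  · intro z hz
    rw [Set.Finite.mem_toFinset] at hz ⊢
    exact ⟨hz.1, hz.2.trans hy.2⟩

section Mu2Lemmas

open Finset Classical

variable {α : Type*} [PartialOrder α] [Fintype α]

open Classical in
lemma mu2_sum (a b : α) :
    ∑ x ∈ univ.filter (fun x => a ≤ x ∧ x ≤ b), mu2 a x = if a = b then 1 else 0 := by
  by_cases hab : a ≤ b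
  · rcases eq_or_lt_of_le hab with rfl | hlt
    · rw [if_pos rfl]
      have : univ.filter (fun x : α => a ≤ x ∧ x ≤ a) = {a} := by
        ext x
        simp only [mem_filter, mem_univ, true_and, mem_singleton]
        exact ⟨fun h => le_antisymm h.2 h.1, by rintro rfl; exact ⟨le_refl _, le_refl _⟩⟩
      rw [this, Finset.sum_singleton, mu2, if_pos rfl]
    · have hne : a ≠ b := ne_of_lt hlt
      rw [if_neg hne]
      have hsplit : univ.filter (fun x : α => a ≤ x ∧ x ≤ b)
          = insert b (univ.filter (fun x : α => a ≤ x ∧ x < b)) := by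
        ext x
        simp only [mem_filter, mem_univ, true_and, mem_insert]
        constructor
        · rintro ⟨h1, h2⟩
          rcases eq_or_lt_of_le h2 with h' | h'
          · exact Or.inl h'
          · exact Or.inr ⟨h1, h'⟩
        · rintro (rfl | ⟨h1, h2⟩)
          · exact ⟨hab, le_refl _⟩
          · exact ⟨h1, le_of_lt h2⟩
      rw [hsplit, Finset.sum_insert (by simp)]
      have hconv : ∑ x ∈ univ.filter (fun x : α => a ≤ x ∧ x < b), mu2 a x
          = ∑ x ∈ (Set.toFinite {y : α | a ≤ y ∧ y < b}).toFinset.attach, mu2 a x.1 := by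
        rw [Finset.sum_attach]
        apply Finset.sum_congr
        · ext x; simp [Set.Finite.mem_toFinset]
        · intros; rfl
      rw [hconv, mu2, if_neg hne]
      ring
  · have hempty : univ.filter (fun x : α => a ≤ x ∧ x ≤ b) = ∅ := by
      ext x
      simp only [mem_filter, mem_univ, true_and, notMem_empty, iff_false]
      rintro ⟨h1, h2⟩
      exact hab (h1.trans h2)
    rw [hempty, Finset.sum_empty, if_neg (by rintro rfl; exact hab (le_refl a))]

open Classical in
lemma mu2_top [OrderTop α] (a : α) : mu2 a ⊤ = mob a := by
  have S1 : ∑ x ∈ univ.filter (fun x : α => a ≤ x),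
      mu2 a x * (∑ y ∈ univ.filter (fun y : α => x ≤ y), mob y) = mu2 a ⊤ := by
    have : ∀ x ∈ univ.filter (fun x : α => a ≤ x),
        mu2 a x * (∑ y ∈ univ.filter (fun y : α => x ≤ y), mob y)
        = if x = ⊤ then mu2 a x else 0 := by
      intro x _
      rw [mob_sum x]
      by_cases hx : x = ⊤ <;> simp [hx]
    rw [Finset.sum_congr rfl this, Finset.sum_ite_eq' (univ.filter (fun x : α => a ≤ x)) ⊤
      (fun x => mu2 a x), if_pos (by simp [le_top])]
  have S2 : ∑ x ∈ univ.filter (fun x : α => a ≤ x),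
      mu2 a x * (∑ y ∈ univ.filter (fun y : α => x ≤ y), mob y) = mob a := by
    have hrw : ∀ x ∈ univ.filter (fun x : α => a ≤ x),
        mu2 a x * (∑ y ∈ univ.filter (fun y : α => x ≤ y), mob y)
        = ∑ y ∈ univ.filter (fun y : α => x ≤ y), mu2 a x * mob y := by
      intro x _
      rw [Finset.mul_sum]
    rw [Finset.sum_congr rfl hrw]
    rw [Finset.sum_comm' (t' := univ.filter (fun y : α => a ≤ y))
      (s' := fun y => univ.filter (fun x : α => a ≤ x ∧ x ≤ y))
      (by
        intro x y
        simp only [mem_filter, mem_univ, true_and]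
        constructor
        · rintro ⟨h1, h2⟩; exact ⟨⟨h1, h2⟩, h1.trans h2⟩
        · rintro ⟨⟨h1, h2⟩, _⟩; exact ⟨h1, h2⟩)]
    have : ∀ y ∈ univ.filter (fun y : α => a ≤ y),
        ∑ x ∈ univ.filter (fun x : α => a ≤ x ∧ x ≤ y), mu2 a x * mob y
        = (if a = y then 1 else 0) * mob y := by
      intro y _
      rw [← Finset.sum_mul, mu2_sum]
    rw [Finset.sum_congr rfl this]
    have : ∀ y ∈ univ.filter (fun y : α => a ≤ y),
        (if a = y then 1 else 0) * mob y = if y = a then mob y else 0 := by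
      intro y _
      by_cases h : a = y
      · subst h; simp
      · rw [if_neg h, if_neg (fun h' => h h'.symm), zero_mul]
    rw [Finset.sum_congr rfl this, Finset.sum_ite_eq' (univ.filter (fun y : α => a ≤ y)) a
      (fun y => mob y), if_pos (by simp)]
  rw [← S1, S2]

end Mu2Lemmas

/-- The closed elements of a closure operator, with the top element. -/
def closedOrderTop {α : Type*} [PartialOrder α] [OrderTop α] (cl : α → α)
    (hinfl : ∀ x, x ≤ cl x) : OrderTop {x : α // cl x = x} where
  top := ⟨⊤, le_antisymm le_top (hinfl ⊤)⟩
  le_top w := (le_top : w.1 ≤ ⊤)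

open Finset in
open Classical in
lemma mob_closure {α : Type*} [PartialOrder α] [OrderTop α] [Fintype α]
    (cl : α → α) (hmono : Monotone cl) (hinfl : ∀ x, x ≤ cl x)
    (hidem : ∀ x, cl (cl x) = cl x) (htop : ∀ x, cl x = ⊤ → x = ⊤)
    (c : α) (hc : cl c = c) :
    mob c = @mob {x : α // cl x = x} _ (closedOrderTop cl hinfl) _ ⟨c, hc⟩ := by
  letI : OrderTop {x : α // cl x = x} := closedOrderTop cl hinfl
  have hadj : ∀ (x : α) (w : {x : α // cl x = x}), cl x ≤ w.1 ↔ x ≤ w.1 := by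
    intro x w
    constructor
    · exact fun h => (hinfl x).trans h
    · intro h
      have h2 := hmono h
      rwa [w.2] at h2
  have htopc : ((⊤ : {x : α // cl x = x}) : α) = ⊤ := rfl
  have htopc' : ∀ x : α, (⟨cl x, hidem x⟩ : {x : α // cl x = x}) = ⊤ ↔ cl x = ⊤ := by
    intro x
    rw [Subtype.ext_iff, htopc]
  rw [← mu2_top c]
  have e1 : mu2 c ⊤ = ∑ x ∈ univ.filter (fun x : α => c ≤ x),
      (if cl x = ⊤ then mu2 c x else 0) := by
    rw [show (∑ x ∈ univ.filter (fun x : α => c ≤ x), (if cl x = ⊤ then mu2 c x else 0))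
        = ∑ x ∈ univ.filter (fun x : α => c ≤ x), (if x = ⊤ then mu2 c x else 0) from
      Finset.sum_congr rfl (by
        intro x _
        congr 1
        simp only [eq_iff_iff]
        exact ⟨htop x, by rintro rfl; exact le_antisymm le_top (hinfl ⊤)⟩)]
    rw [Finset.sum_ite_eq' (univ.filter (fun x : α => c ≤ x)) ⊤ (fun x => mu2 c x),
      if_pos (by simp [le_top])]
  rw [e1]
  have e2 : ∀ x ∈ univ.filter (fun x : α => c ≤ x),
      (if cl x = ⊤ then mu2 c x else 0)
      = ∑ w ∈ univ.filter (fun w : {x : α // cl x = x} =>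
          (⟨cl x, hidem x⟩ : {x : α // cl x = x}) ≤ w), mu2 c x * mob w := by
    intro x _
    rw [← Finset.mul_sum, mob_sum (⟨cl x, hidem x⟩ : {x : α // cl x = x})]
    by_cases h : cl x = ⊤
    · rw [if_pos h, if_pos ((htopc' x).2 h), mul_one]
    · rw [if_neg h, if_neg (fun h' => h ((htopc' x).1 h')), mul_zero]
  rw [Finset.sum_congr rfl e2]
  rw [Finset.sum_comm' (t' := (univ : Finset {x : α // cl x = x}))
    (s' := fun w : {x : α // cl x = x} => univ.filter (fun x : α => c ≤ x ∧ x ≤ w.1))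
    (by
      intro x w
      simp only [mem_filter, mem_univ, true_and, and_true]
      constructor
      · rintro ⟨h1, h2⟩
        exact ⟨h1, (hadj x w).1 h2⟩
      · rintro ⟨h1, h2⟩
        exact ⟨h1, (hadj x w).2 h2⟩)]
  have e3 : ∀ w ∈ (univ : Finset {x : α // cl x = x}),
      ∑ x ∈ univ.filter (fun x : α => c ≤ x ∧ x ≤ w.1), mu2 c x * mob w
      = if w = ⟨c, hc⟩ then mob w else 0 := by
    intro w _
    rw [← Finset.sum_mul, mu2_sum]
    by_cases h : c = w.1
    · rw [if_pos h, if_pos (Subtype.ext h.symm), one_mul]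
    · rw [if_neg h, if_neg (fun h' => h (by rw [h'])), zero_mul]
  rw [Finset.sum_congr rfl e3, Finset.sum_ite_eq' (univ : Finset {x : α // cl x = x})
    (⟨c, hc⟩ : {x : α // cl x = x}) (fun w => mob w), if_pos (mem_univ _)]


section PiSubgroup

variable {n : ℕ} {G : Fin n → Type*} [∀ i, Group (G i)]

/-- The product closure of a subgroup of a direct product. -/
def pcl (H : Subgroup (∀ i, G i)) : Subgroup (∀ i, G i) :=
  Subgroup.pi Set.univ (fun i => H.map (Pi.evalMonoidHom G i))

lemma le_pcl (H : Subgroup (∀ i, G i)) : H ≤ pcl H := by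
  intro x hx
  rw [pcl, Subgroup.mem_pi]
  intro i _
  exact ⟨x, hx, rfl⟩

lemma pi_mono' {M M' : ∀ i, Subgroup (G i)} (h : ∀ i, M i ≤ M' i) :
    Subgroup.pi Set.univ M ≤ Subgroup.pi Set.univ M' := by
  intro x hx
  rw [Subgroup.mem_pi] at hx ⊢
  exact fun i hi => h i (hx i hi)

lemma pcl_mono : Monotone (pcl (G := G)) := by
  intro H K h
  exact pi_mono' (fun i => Subgroup.map_mono h)

lemma map_eval_pi (M : ∀ i, Subgroup (G i)) (i : Fin n) :
    (Subgroup.pi Set.univ M).map (Pi.evalMonoidHom G i) = M i := by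
  apply le_antisymm
  · rintro x ⟨y, hy, rfl⟩
    rw [SetLike.mem_coe, Subgroup.mem_pi] at hy
    exact hy i (Set.mem_univ i)
  · intro x hx
    refine ⟨Pi.mulSingle i x, ?_, by simp⟩
    rw [SetLike.mem_coe, Subgroup.mulSingle_mem_pi]
    exact fun _ => hx

lemma pcl_pi (M : ∀ i, Subgroup (G i)) :
    pcl (Subgroup.pi Set.univ M) = Subgroup.pi Set.univ M := by
  rw [pcl]
  congr 1
  funext i
  exact map_eval_pi M i

lemma pcl_idem (H : Subgroup (∀ i, G i)) : pcl (pcl H) = pcl H := pcl_pi _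

lemma pi_le_pi_iff (M M' : ∀ i, Subgroup (G i)) :
    Subgroup.pi Set.univ M ≤ Subgroup.pi Set.univ M' ↔ ∀ i, M i ≤ M' i := by
  constructor
  · intro h i
    rw [← map_eval_pi M i, ← map_eval_pi M' i]
    exact Subgroup.map_mono h
  · exact pi_mono'

lemma pi_eq_top_iff (M : ∀ i, Subgroup (G i)) :
    Subgroup.pi Set.univ M = ⊤ ↔ ∀ i, M i = ⊤ := by
  constructor
  · intro h i
    rw [← map_eval_pi M i, h, Subgroup.map_top_of_surjective]
    exact Function.surjective_eval i
  · intro h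
    rw [eq_top_iff]
    intro x _
    rw [Subgroup.mem_pi]
    intro i _
    rw [h i]
    trivial

lemma conj_comp_eval (g : ∀ i, G i) (i : Fin n) :
    (Pi.evalMonoidHom G i).comp (MulAut.conj g).toMonoidHom
      = ((MulAut.conj (g i)).toMonoidHom).comp (Pi.evalMonoidHom G i) := by
  ext x
  rfl

lemma map_pi_conj (g : ∀ i, G i) (M : ∀ i, Subgroup (G i)) :
    (Subgroup.pi Set.univ M).map (MulAut.conj g).toMonoidHom
      = Subgroup.pi Set.univ (fun i => (M i).map (MulAut.conj (g i)).toMonoidHom) := by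
  ext x
  rw [Subgroup.mem_map_equiv, Subgroup.mem_pi, Subgroup.mem_pi]
  apply forall_congr'
  intro i
  apply imp_congr_right
  intro _
  rw [Subgroup.mem_map_equiv]
  rfl

lemma pcl_conj (g : ∀ i, G i) (H : Subgroup (∀ i, G i)) :
    pcl (H.map (MulAut.conj g).toMonoidHom) = (pcl H).map (MulAut.conj g).toMonoidHom := by
  rw [pcl, pcl, map_pi_conj]
  congr 1
  funext i
  rw [Subgroup.map_map, Subgroup.map_map, conj_comp_eval]

lemma map_conj_map_conj (g h : ∀ i, G i) (S : Subgroup (∀ i, G i)) :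
    (S.map (MulAut.conj h).toMonoidHom).map (MulAut.conj g).toMonoidHom
      = S.map (MulAut.conj (g * h)).toMonoidHom := by
  rw [Subgroup.map_map]
  congr 1
  ext x
  simp [mul_assoc]

lemma map_conj_eq_top {g : ∀ i, G i} {S : Subgroup (∀ i, G i)}
    (h : S.map (MulAut.conj g).toMonoidHom = ⊤) : S = ⊤ := by
  have h2 : (S.map (MulAut.conj g).toMonoidHom).map (MulAut.conj g⁻¹).toMonoidHom
      = S.map (MulAut.conj (g⁻¹ * g)).toMonoidHom := map_conj_map_conj _ _ _
  rw [h, inv_mul_cancel, Subgroup.map_top_of_surjective _ (MulAut.conj g⁻¹).surjective] at h2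
  rw [show MulAut.conj (1 : ∀ i, G i) = 1 from map_one MulAut.conj,
    show MulEquiv.toMonoidHom (1 : MulAut (∀ i, G i)) = MonoidHom.id _ from rfl,
    Subgroup.map_id] at h2
  exact h2.symm

end PiSubgroup

/- ======================= auxiliary machinery ======================= -/

section ClassLevel

variable {G' : Type*} [Group G']

lemma cSub_le_of_le {H K : Subgroup G'} (h : H ≤ K) : CSub.mk H ≤ CSub.mk K :=
  ⟨1, by
    rw [show MulAut.conj (1 : G') = 1 from map_one MulAut.conj,
      show MulEquiv.toMonoidHom (1 : MulAut G') = MonoidHom.id G' from rfl, Subgroup.map_id]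
    exact h⟩

lemma conjClassOf_le_iff {H K : Subgroup G'} :
    conjClassOf G' H ≤ conjClassOf G' K
      ↔ ∃ g : G', H ≤ K.map (MulAut.conj g).toMonoidHom := by
  rw [conjClassOf, conjClassOf, toAntisymmetrization_le_toAntisymmetrization_iff]
  exact Iff.rfl

lemma conjClassOf_out (x : ConjClassSub G') :
    conjClassOf G' (CSub.toSubgroup (Quotient.out x)) = x :=
  Quotient.out_eq x

lemma conjClassSub_top : (⊤ : ConjClassSub G') = conjClassOf G' ⊤ := rfl

end ClassLevel

section PiClassLevel

variable {n : ℕ} {G : Fin n → Type*} [∀ i, Group (G i)]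

/-- The product closure on the poset of conjugacy classes of subgroups of a product. -/
noncomputable def pclClass : ConjClassSub (∀ i, G i) → ConjClassSub (∀ i, G i) :=
  Quotient.map (fun S : CSub (∀ i, G i) => CSub.mk (pcl (CSub.toSubgroup S)))
    (by
      rintro a b ⟨⟨g, hg⟩, ⟨h, hh⟩⟩
      exact ⟨⟨g, (pcl_mono hg).trans (le_of_eq (pcl_conj g _))⟩,
        ⟨h, (pcl_mono hh).trans (le_of_eq (pcl_conj h _))⟩⟩)

lemma pclClass_mk (S : Subgroup (∀ i, G i)) :
    pclClass (conjClassOf (∀ i, G i) S) = conjClassOf (∀ i, G i) (pcl S) := rfl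

lemma pclClass_mono : Monotone (pclClass (G := G)) := by
  intro x y
  induction x using Quotient.ind with
  | _ a =>
    induction y using Quotient.ind with
    | _ b =>
      intro h
      have h' : a ≤ b := by
        rwa [show (⟦a⟧ : ConjClassSub (∀ i, G i))
            = toAntisymmetrization (α := CSub (∀ i, G i)) (· ≤ ·) a from rfl,
          show (⟦b⟧ : ConjClassSub (∀ i, G i))
            = toAntisymmetrization (α := CSub (∀ i, G i)) (· ≤ ·) b from rfl,
          toAntisymmetrization_le_toAntisymmetrization_iff] at h
      obtain ⟨g, hg⟩ := h'
      show pclClass (conjClassOf (∀ i, G i) (CSub.toSubgroup a))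
        ≤ pclClass (conjClassOf (∀ i, G i) (CSub.toSubgroup b))
      rw [pclClass_mk, pclClass_mk, conjClassOf_le_iff]
      exact ⟨g, (pcl_mono hg).trans (le_of_eq (pcl_conj g _))⟩

lemma pclClass_infl : ∀ x : ConjClassSub (∀ i, G i), x ≤ pclClass x := by
  intro x
  induction x using Quotient.ind with
  | _ a =>
    show conjClassOf (∀ i, G i) (CSub.toSubgroup a)
      ≤ pclClass (conjClassOf (∀ i, G i) (CSub.toSubgroup a))
    rw [pclClass_mk, conjClassOf_le_iff]
    obtain ⟨g, hg⟩ := cSub_le_of_le (le_pcl (CSub.toSubgroup a))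
    exact ⟨g, hg⟩

lemma pclClass_idem : ∀ x : ConjClassSub (∀ i, G i), pclClass (pclClass x) = pclClass x := by
  intro x
  induction x using Quotient.ind with
  | _ a =>
    show pclClass (pclClass (conjClassOf (∀ i, G i) (CSub.toSubgroup a)))
      = pclClass (conjClassOf (∀ i, G i) (CSub.toSubgroup a))
    rw [pclClass_mk, pclClass_mk, pcl_idem]

lemma conjClassOf_pi_le_iff (A B : ∀ i, Subgroup (G i)) :
    conjClassOf (∀ i, G i) (Subgroup.pi Set.univ A)
      ≤ conjClassOf (∀ i, G i) (Subgroup.pi Set.univ B)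
      ↔ ∀ i, conjClassOf (G i) (A i) ≤ conjClassOf (G i) (B i) := by
  rw [conjClassOf_le_iff]
  constructor
  · rintro ⟨g, hg⟩ i
    rw [conjClassOf_le_iff]
    rw [map_pi_conj] at hg
    exact ⟨g i, (pi_le_pi_iff _ _).1 hg i⟩
  · intro h
    choose g hg using fun i => (conjClassOf_le_iff).1 (h i)
    refine ⟨g, ?_⟩
    rw [map_pi_conj]
    exact pi_mono' hg

lemma conjClassOf_pi_eq_iff (A B : ∀ i, Subgroup (G i)) :
    conjClassOf (∀ i, G i) (Subgroup.pi Set.univ A)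
      = conjClassOf (∀ i, G i) (Subgroup.pi Set.univ B)
      ↔ ∀ i, conjClassOf (G i) (A i) = conjClassOf (G i) (B i) := by
  rw [le_antisymm_iff, conjClassOf_pi_le_iff, conjClassOf_pi_le_iff, ← forall_and]
  exact forall_congr' (fun i => le_antisymm_iff.symm)

lemma pclClass_top_of_max [∀ i, Finite (G i)]
    (hmax : ∀ M : Subgroup (∀ i, G i), IsCoatom M →
      ∃ M' : ∀ i, Subgroup (G i), M = Subgroup.pi Set.univ M') :
    ∀ x : ConjClassSub (∀ i, G i), pclClass x = ⊤ → x = ⊤ := by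
  intro x
  induction x using Quotient.ind with
  | _ a =>
    intro hx
    have hx' : pclClass (conjClassOf (∀ i, G i) (CSub.toSubgroup a))
        = conjClassOf (∀ i, G i) ⊤ := hx
    rw [pclClass_mk] at hx'
    -- extract: pcl a = ⊤
    have htople : conjClassOf (∀ i, G i) ⊤
        ≤ conjClassOf (∀ i, G i) (pcl (CSub.toSubgroup a)) := le_of_eq hx'.symm
    rw [conjClassOf_le_iff] at htople
    obtain ⟨g, hg⟩ := htople
    have hpcltop : pcl (CSub.toSubgroup a) = ⊤ :=
      map_conj_eq_top (top_le_iff.1 hg)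
    have hevals : ∀ i, (CSub.toSubgroup a).map (Pi.evalMonoidHom G i) = ⊤ :=
      (pi_eq_top_iff _).1 hpcltop
    have hS : CSub.toSubgroup a = ⊤ := by
      rcases eq_top_or_exists_le_coatom (CSub.toSubgroup a) with h | ⟨M, hM, hle⟩
      · exact h
      · exfalso
        obtain ⟨M', rfl⟩ := hmax M hM
        have : ∀ i, M' i = ⊤ := by
          intro i
          have h1 : (CSub.toSubgroup a).map (Pi.evalMonoidHom G i)
              ≤ (Subgroup.pi Set.univ M').map (Pi.evalMonoidHom G i) :=
            Subgroup.map_mono hle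
          rw [hevals i, map_eval_pi] at h1
          exact top_le_iff.1 h1
        exact hM.1 ((pi_eq_top_iff M').2 this)
    show conjClassOf (∀ i, G i) (CSub.toSubgroup a) = ⊤
    rw [hS]
    rfl

/-- The poset of closed classes is isomorphic to the product of the class posets. -/
noncomputable def piClassIso [∀ i, Finite (G i)] :
    (∀ i, ConjClassSub (G i)) ≃o {x : ConjClassSub (∀ i, G i) // pclClass x = x} := by
  refine
    { toEquiv := Equiv.ofBijective
        (fun x => (⟨conjClassOf (∀ i, G i)
          (Subgroup.pi Set.univ (fun i => CSub.toSubgroup (Quotient.out (x i)))),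
          by rw [pclClass_mk, pcl_pi]⟩ :
            {x : ConjClassSub (∀ i, G i) // pclClass x = x})) ⟨?_, ?_⟩,
      map_rel_iff' := ?_ }
  · -- injective
    intro x y hxy
    rw [Subtype.ext_iff] at hxy
    simp only at hxy
    rw [conjClassOf_pi_eq_iff] at hxy
    funext i
    have := hxy i
    rwa [conjClassOf_out, conjClassOf_out] at this
  · -- surjective
    intro w
    obtain ⟨w, hw⟩ := w
    have hrep : conjClassOf (∀ i, G i) (CSub.toSubgroup (Quotient.out w)) = w :=
      conjClassOf_out w
    refine ⟨fun i => conjClassOf (G i)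
      ((CSub.toSubgroup (Quotient.out w)).map (Pi.evalMonoidHom G i)), ?_⟩
    apply Subtype.ext
    simp only
    have h1 : conjClassOf (∀ i, G i) (Subgroup.pi Set.univ (fun i => CSub.toSubgroup
        (Quotient.out (conjClassOf (G i) ((CSub.toSubgroup (Quotient.out w)).map
          (Pi.evalMonoidHom G i))))))
        = conjClassOf (∀ i, G i) (Subgroup.pi Set.univ (fun i =>
            (CSub.toSubgroup (Quotient.out w)).map (Pi.evalMonoidHom G i))) := by
      rw [conjClassOf_pi_eq_iff]
      intro i
      rw [conjClassOf_out]
    rw [h1]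
    show conjClassOf (∀ i, G i) (pcl (CSub.toSubgroup (Quotient.out w))) = w
    rw [← pclClass_mk, hrep, hw]
  · -- map_rel_iff'
    intro x y
    show (conjClassOf (∀ i, G i) _ ≤ conjClassOf (∀ i, G i) _) ↔ _
    rw [conjClassOf_pi_le_iff]
    constructor
    · intro h i
      have := h i
      rwa [conjClassOf_out, conjClassOf_out] at this
    · intro h i
      have := h i
      rw [← conjClassOf_out (x i), ← conjClassOf_out (y i)] at this
      exact this

end PiClassLevel

/-- If every maximal subgroup of `G = ∏ Gᵢ` splits as a direct product, then the Möbius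
function `λ` of a product subgroup is the product of the `λ` functions. -/
theorem lamSub_pi (n : ℕ) (hn : 2 ≤ n) (G : Fin n → Type*) [∀ i, Group (G i)] [∀ i, Finite (G i)]
    (hmax : ∀ M : Subgroup (∀ i, G i), IsCoatom M →
      ∃ M' : ∀ i, Subgroup (G i), M = Subgroup.pi Set.univ M')
    (H : ∀ i, Subgroup (G i)) :
    lamSub (Subgroup.pi Set.univ H) = ∏ i, lamSub (H i) := by
  classical
  letI : Fintype (ConjClassSub (∀ i, G i)) := Fintype.ofFinite _
  letI : ∀ i, Fintype (ConjClassSub (G i)) := fun i => Fintype.ofFinite _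
  have hc : pclClass (conjClassOf (∀ i, G i) (Subgroup.pi Set.univ H))
      = conjClassOf (∀ i, G i) (Subgroup.pi Set.univ H) := by
    rw [pclClass_mk, pcl_pi]
  have hmc := mob_closure (α := ConjClassSub (∀ i, G i)) pclClass pclClass_mono pclClass_infl
    pclClass_idem (pclClass_top_of_max hmax) _ hc
  letI : OrderTop {x : ConjClassSub (∀ i, G i) // pclClass x = x} :=
    closedOrderTop pclClass pclClass_infl
  have he : piClassIso (G := G) (fun i => conjClassOf (G i) (H i))
      = ⟨conjClassOf (∀ i, G i) (Subgroup.pi Set.univ H), hc⟩ := by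
    apply Subtype.ext
    show conjClassOf (∀ i, G i) (Subgroup.pi Set.univ fun i =>
        CSub.toSubgroup (Quotient.out (conjClassOf (G i) (H i))))
      = conjClassOf (∀ i, G i) (Subgroup.pi Set.univ H)
    rw [conjClassOf_pi_eq_iff]
    intro i
    rw [conjClassOf_out]
  have hiso := mob_orderIso (piClassIso (G := G)) (fun i => conjClassOf (G i) (H i))
  rw [he] at hiso
  have hpi := mob_pi (fun i => conjClassOf (G i) (H i))
  simp only [lamSub]
  exact hmc.trans (hiso.trans hpi)
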